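/- For kernel ridge regression with positive definite gram matrix K and λ > 0, if α* = (K + λ I)⁻¹ y is nonzero, then the estimate λ̂ = -(α*ᵀ α*)⁻¹ α*ᵀ (K α* - y) equals λ. -/

import Mathlib

lemma aux_posdef {n : ℕ} {K : Matrix (Fin n) (Fin n) ℝ} (hK : K.PosDef)
    {lam : ℝ} (hlam : 0 < lam) :
    (K + lam • (1 : Matrix (Fin n) (Fin n) ℝ)).PosDef := by
  rw [Matrix.posDef_iff_dotProduct_mulVec]
  constructor
  · simp [Matrix.IsHermitian, Matrix.conjTranspose_add, Matrix.conjTranspose_smul, hK.1.eq]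
    exact hK.1
  · intro x hx
    have h1 := hK.dotProduct_mulVec_pos hx
    have h2 : (0:ℝ) < lam * dotProduct (star x) x := by
      have := Matrix.dotProduct_star_self_pos_iff.mpr hx
      positivity
    simp only [Matrix.add_mulVec, dotProduct_add, Matrix.smul_mulVec,
      Matrix.one_mulVec, dotProduct_smul, smul_eq_mul] at *
    linarith

/-- For kernel ridge regression with positive definite `K` and `λ > 0`, if
`α* = (K + λ I)⁻¹ y` is nonzero, then
`λ̂ = -(α*ᵀ α*)⁻¹ α*ᵀ (K α* - y)` equals `λ`. -/
theorem stmt_5 (n : ℕ) (K : Matrix (Fin n) (Fin n) ℝ) (hK : K.PosDef)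
    (lam : ℝ) (hlam : 0 < lam) (y : Fin n → ℝ) (α : Fin n → ℝ)
    (hα : α = (K + lam • (1 : Matrix (Fin n) (Fin n) ℝ))⁻¹.mulVec y)
    (hα0 : α ≠ 0) :
    -(dotProduct α α)⁻¹ *
      dotProduct α (K.mulVec α - y) = lam := by
  have hpd := aux_posdef hK hlam
  have hinv : (K + lam • (1 : Matrix (Fin n) (Fin n) ℝ)) *
      (K + lam • (1 : Matrix (Fin n) (Fin n) ℝ))⁻¹ = 1 :=
    Matrix.mul_nonsing_inv _ (Matrix.isUnit_iff_isUnit_det _ |>.mp hpd.isUnit)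
  have hy : (K + lam • (1 : Matrix (Fin n) (Fin n) ℝ)).mulVec α = y := by
    rw [hα, Matrix.mulVec_mulVec, hinv, Matrix.one_mulVec]
  have hKy : K.mulVec α - y = -(lam • α) := by
    rw [← hy]
    simp [Matrix.add_mulVec, Matrix.smul_mulVec, Matrix.one_mulVec]
  have hαα : dotProduct α α ≠ 0 := by
    intro h
    exact hα0 (by
      funext i
      have := dotProduct_self_eq_zero.mp h
      simpa using congrFun this i)
  rw [hKy]
  simp only [dotProduct_neg, dotProduct_smul, smul_eq_mul]
  field_simp
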